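/- Let Λ ≥ 1 and let (a_n) be a sequence in a normed ring with ‖a₀‖ ≤ Λ, ‖a₁‖ ≤ 3Λ², and for n ≥ 1, ‖a_{n+1}‖ ≤ (1/(n+1))·(Λ·(n+1)·‖a_n‖) + Λ·‖a_n‖ + (1/(n+1))·Σ_{j=0}^{n} ‖a_j‖·‖a_{n−j}‖. Then ‖a_n‖ ≤ 3ⁿ·Λ^{n+1} for all n ≥ 0, so limsup_n ‖a_n‖^{1/n} ≤ 3Λ. -/

import Mathlib

open Finset Filter

theorem stmt_13 {A : Type*} [NormedRing A] (Λ : ℝ) (hΛ : 1 ≤ Λ) (a : ℕ → A)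
    (h0 : ‖a 0‖ ≤ Λ) (h1 : ‖a 1‖ ≤ 3 * Λ ^ 2)
    (hrec : ∀ n : ℕ, 1 ≤ n →
      ‖a (n + 1)‖ ≤ (1 / (n + 1 : ℝ)) * (Λ * (n + 1) * ‖a n‖) + Λ * ‖a n‖ +
        (1 / (n + 1 : ℝ)) * ∑ j ∈ Finset.range (n + 1), ‖a j‖ * ‖a (n - j)‖) :
    (∀ n : ℕ, ‖a n‖ ≤ 3 ^ n * Λ ^ (n + 1)) ∧
    Filter.limsup (fun n : ℕ => ‖a n‖ ^ ((1 : ℝ) / n)) Filter.atTop ≤ 3 * Λ := by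
  have hΛ0 : (0:ℝ) < Λ := lt_of_lt_of_le one_pos hΛ
  have key : ∀ n : ℕ, ‖a n‖ ≤ 3 ^ n * Λ ^ (n + 1) := by
    intro n
    induction n using Nat.strong_induction_on with
    | _ n ih =>
      match n with
      | 0 => simpa using h0
      | 1 => simpa [pow_succ] using h1
      | (m + 2) =>
        set n := m + 1 with hn
        have hm : 1 ≤ n := Nat.le_add_left 1 m
        have hrec' := hrec n hm
        have hnpos : (0:ℝ) < (n:ℝ) + 1 := by positivity
        have hsum : ∑ j ∈ Finset.range (n+1), ‖a j‖ * ‖a (n - j)‖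
            ≤ (n+1 : ℝ) * (3 ^ n * Λ ^ (n + 2)) := by
          have : ∀ j ∈ Finset.range (n+1), ‖a j‖ * ‖a (n - j)‖ ≤ 3 ^ n * Λ ^ (n + 2) := by
            intro j hj
            have hjn : j ≤ n := Nat.lt_succ_iff.mp (Finset.mem_range.mp hj)
            have h1 : ‖a j‖ ≤ 3 ^ j * Λ ^ (j + 1) := ih j (by omega)
            have h2 : ‖a (n - j)‖ ≤ 3 ^ (n - j) * Λ ^ (n - j + 1) := ih (n - j) (by omega)
            calc ‖a j‖ * ‖a (n - j)‖
                ≤ (3 ^ j * Λ ^ (j + 1)) * (3 ^ (n - j) * Λ ^ (n - j + 1)) := by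
                  apply mul_le_mul h1 h2 (norm_nonneg _) (by positivity)
              _ = 3 ^ (j + (n - j)) * Λ ^ ((j + 1) + (n - j + 1)) := by
                  rw [pow_add, pow_add]; ring
              _ = 3 ^ n * Λ ^ (n + 2) := by
                  congr 1 <;> congr 1 <;> omega
          calc ∑ j ∈ Finset.range (n+1), ‖a j‖ * ‖a (n - j)‖
              ≤ ∑ j ∈ Finset.range (n+1), (3 ^ n * Λ ^ (n + 2) : ℝ) := Finset.sum_le_sum this
            _ = (n+1 : ℝ) * (3 ^ n * Λ ^ (n + 2)) := by
                rw [Finset.sum_const, Finset.card_range]; push_cast; ring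
        have hX : ‖a n‖ ≤ 3 ^ n * Λ ^ (n + 1) := ih n (by omega)
        have hXnn : (0:ℝ) ≤ ‖a n‖ := norm_nonneg _
        calc ‖a (n + 1)‖
            ≤ (1 / ((n:ℝ) + 1)) * (Λ * ((n:ℝ) + 1) * ‖a n‖) + Λ * ‖a n‖ +
              (1 / ((n:ℝ) + 1)) * ∑ j ∈ Finset.range (n + 1), ‖a j‖ * ‖a (n - j)‖ := hrec'
          _ = Λ * ‖a n‖ + Λ * ‖a n‖ +
              (1 / ((n:ℝ) + 1)) * ∑ j ∈ Finset.range (n + 1), ‖a j‖ * ‖a (n - j)‖ := by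
              field_simp
          _ ≤ Λ * (3 ^ n * Λ ^ (n + 1)) + Λ * (3 ^ n * Λ ^ (n + 1)) +
              (1 / ((n:ℝ) + 1)) * ((n+1 : ℝ) * (3 ^ n * Λ ^ (n + 2))) := by
              gcongr
          _ = 3 * (3 ^ n * Λ ^ (n + 2)) := by
              field_simp; ring
          _ = 3 ^ (n + 1) * Λ ^ (n + 2) := by ring
  refine ⟨key, ?_⟩
  have hb : Tendsto (fun n : ℕ => (3:ℝ) * Λ * Λ ^ ((1:ℝ)/n)) atTop (nhds (3*Λ)) := by
    have h1' : Tendsto (fun n : ℕ => ((1:ℝ)/n)) atTop (nhds 0) :=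
      tendsto_one_div_atTop_nhds_zero_nat
    have h2 : Tendsto (fun n : ℕ => Λ ^ ((1:ℝ)/n)) atTop (nhds 1) := by
      have hc : ContinuousAt (fun x : ℝ => Λ ^ x) 0 :=
        Real.continuousAt_const_rpow (ne_of_gt hΛ0)
      have := hc.tendsto.comp h1'
      simpa [Function.comp_def, Real.rpow_zero] using this
    have := h2.const_mul ((3:ℝ)*Λ)
    simpa [mul_comm, mul_one] using this
  have hle : ∀ᶠ n in atTop, ‖a n‖ ^ ((1:ℝ)/n) ≤ (3:ℝ) * Λ * Λ ^ ((1:ℝ)/n) := by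
    filter_upwards [eventually_ge_atTop 1] with n hn
    have hnR : (0:ℝ) < (n:ℝ) := by exact_mod_cast hn
    have h1n : (0:ℝ) ≤ (1:ℝ)/n := by positivity
    calc ‖a n‖ ^ ((1:ℝ)/n)
        ≤ ((3:ℝ) ^ n * Λ ^ (n + 1)) ^ ((1:ℝ)/n) :=
          Real.rpow_le_rpow (norm_nonneg _) (key n) h1n
      _ = (3:ℝ) * Λ * Λ ^ ((1:ℝ)/n) := by
          rw [Real.mul_rpow (by positivity) (by positivity),
            ← Real.rpow_natCast (3:ℝ) n, ← Real.rpow_natCast Λ (n+1),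
            ← Real.rpow_mul (by norm_num), ← Real.rpow_mul (le_of_lt hΛ0)]
          have e1 : (n:ℝ) * ((1:ℝ)/n) = 1 := by field_simp
          have e2 : ((n:ℝ) + 1) * ((1:ℝ)/n) = 1 + (1:ℝ)/n := by field_simp
          push_cast
          rw [e1, e2, Real.rpow_one, Real.rpow_add hΛ0, Real.rpow_one]
          ring
  have hcb : IsCoboundedUnder (· ≤ ·) atTop (fun n : ℕ => ‖a n‖ ^ ((1:ℝ)/n)) :=
    isCoboundedUnder_le_of_le atTop (x := 0)
      (fun n => Real.rpow_nonneg (norm_nonneg _) _)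
  have hbd : IsBoundedUnder (· ≤ ·) atTop (fun n : ℕ => (3:ℝ) * Λ * Λ ^ ((1:ℝ)/n)) :=
    hb.isBoundedUnder_le
  calc limsup (fun n : ℕ => ‖a n‖ ^ ((1:ℝ)/n)) atTop
      ≤ limsup (fun n : ℕ => (3:ℝ) * Λ * Λ ^ ((1:ℝ)/n)) atTop :=
        limsup_le_limsup hle hcb hbd
    _ = 3 * Λ := hb.limsup_eq
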